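/- Let x = (x₁,x₂) ∈ dom g₁ × dom g₂ and let x̄ = (x̄₁,x̄₂) be its projection onto the optimal set X. Then f(x) − f(x̄) ≤ (L₁/(σβ₁)) [ f(x₁,x₂) − f(x₁ + (σβ₁/L₁)(x̄₁ − x₁), x₂) ] + ⟨∇₂f(x₁,x₂), x₂ − x̄₂⟩. -/

import Mathlib

open Set

/-- The composite objective function `H(x₁,x₂) = f(x₁,x₂) + g₁(x₁) + g₂(x₂)`. -/
noncomputable def objFun {B₁ B₂ : Type*} (f : B₁ × B₂ → ℝ) (g₁ : B₁ → ℝ) (g₂ : B₂ → ℝ)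
    (x : B₁ × B₂) : ℝ :=
  f x + g₁ x.1 + g₂ x.2

/-- key estimate for the smooth part under quasi-strong convexity:
for `x = (x₁,x₂) ∈ dom g₁ × dom g₂` with projection `xb = (xb₁,xb₂)` onto the optimal set `X`,
`f(x) - f(xb) ≤ (L₁/(σβ₁)) [ f(x₁,x₂) - f(x₁ + (σβ₁/L₁)(xb₁ - x₁), x₂) ]
  + ⟨∇₂f(x₁,x₂), x₂ - xb₂⟩`. -/
theorem stmt4
    {B₁ B₂ : Type*}
    [NormedAddCommGroup B₁] [NormedSpace ℝ B₁] [CompleteSpace B₁]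
    [NormedAddCommGroup B₂] [NormedSpace ℝ B₂] [CompleteSpace B₂]
    (f : B₁ × B₂ → ℝ) (Df : B₁ × B₂ → (B₁ × B₂) →L[ℝ] ℝ)
    (g₁ : B₁ → ℝ) (g₂ : B₂ → ℝ) (S₁ : Set B₁) (S₂ : Set B₂)
    -- (P3): g₁, g₂ proper convex on their (convex, nonempty) domains
    (hS₁c : Convex ℝ S₁) (hS₂c : Convex ℝ S₂)
    (hS₁ne : S₁.Nonempty) (hS₂ne : S₂.Nonempty)
    (hg₁conv : ConvexOn ℝ S₁ g₁) (hg₂conv : ConvexOn ℝ S₂ g₂)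
    -- (P4): f convex and Fréchet differentiable on dom g₁ × dom g₂, with derivative Df
    (hfconv : ConvexOn ℝ (S₁ ×ˢ S₂) f)
    (hfdiff : ∀ x ∈ S₁ ×ˢ S₂, HasFDerivWithinAt f (Df x) (S₁ ×ˢ S₂) x)
    -- (P2): a norm `N` on the product space and the constant β₁ > 0
    (N : B₁ × B₂ → ℝ) (β₁ : ℝ) (hβ₁ : 0 < β₁)
    (hNnonneg : ∀ z : B₁ × B₂, 0 ≤ N z)
    (hN₁ : ∀ z : B₁ × B₂, β₁ * ‖z.1‖ ^ 2 ≤ N z ^ 2)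
    -- (P5): first-block descent inequality with finite constant L₁ > 0
    (L₁ : ℝ) (hL₁pos : 0 < L₁)
    (hdesc₁ : ∀ x₁ ∈ S₁, ∀ x₂ ∈ S₂, ∀ h₁ : B₁, x₁ + h₁ ∈ S₁ →
      f (x₁ + h₁, x₂) ≤ f (x₁, x₂) + Df (x₁, x₂) (h₁, 0) + L₁ / 2 * ‖h₁‖ ^ 2)
    -- (P6): nonempty optimal set X
    (X : Set (B₁ × B₂))
    (hX : X = {y ∈ S₁ ×ˢ S₂ | ∀ z ∈ S₁ ×ˢ S₂, objFun f g₁ g₂ y ≤ objFun f g₁ g₂ z})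
    (hXne : X.Nonempty)
    -- projections onto X with respect to N
    (proj : B₁ × B₂ → B₁ × B₂)
    (hproj : ∀ z ∈ S₁ ×ˢ S₂, proj z ∈ X ∧ ∀ y ∈ X, N (z - proj z) ≤ N (z - y))
    -- (P8a): quasi-strong convexity of f with modulus σ > 0, and 0 < σβ₁/L₁ ≤ 1
    (σ : ℝ) (hσ : 0 < σ)
    (hqsc : ∀ z ∈ S₁ ×ˢ S₂,
      f z + Df z (proj z - z) + σ / 2 * N (z - proj z) ^ 2 ≤ f (proj z))
    (hratio : σ * β₁ / L₁ ≤ 1)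
    -- the point x and its projection
    (x : B₁ × B₂) (hx : x ∈ S₁ ×ˢ S₂) :
    f x - f (proj x) ≤
      L₁ / (σ * β₁) *
        (f x - f (x.1 + (σ * β₁ / L₁) • ((proj x).1 - x.1), x.2)) +
      Df x (0, x.2 - (proj x).2) := by
  obtain ⟨hx1, hx2⟩ := hx
  set xb := proj x with hxb
  have hα : 0 < σ * β₁ / L₁ := by positivity
  set α : ℝ := σ * β₁ / L₁ with hαdef
  have hxbX : xb ∈ X := (hproj x ⟨hx1, hx2⟩).1
  have hxbS : xb ∈ S₁ ×ˢ S₂ := by rw [hX] at hxbX; exact hxbX.1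
  set v : B₁ := xb.1 - x.1 with hv
  have hmem : x.1 + α • v ∈ S₁ := by
    have : x.1 + α • v = (1 - α) • x.1 + α • xb.1 := by
      simp [hv, smul_sub, sub_smul]; abel
    rw [this]
    exact hS₁c hx1 hxbS.1 (by linarith) hα.le (by ring)
  have hdesc := hdesc₁ x.1 hx1 x.2 hx2 (α • v) hmem
  have hA : Df (x.1, x.2) (α • v, 0) = α * Df x (v, 0) := by
    have h0 : ((α • v, (0:B₂)) : B₁ × B₂) = α • (v, 0) := by
      rw [Prod.smul_mk, smul_zero]
    rw [h0, map_smul, smul_eq_mul]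
  have hnv : ‖α • v‖ ^ 2 = α ^ 2 * ‖v‖ ^ 2 := by
    rw [norm_smul, Real.norm_eq_abs, mul_pow, sq_abs]
  have hq := hqsc x ⟨hx1, hx2⟩
  rw [← hxb] at hq
  have hsplit : Df x (xb - x) = Df x (v, 0) + Df x (0, xb.2 - x.2) := by
    rw [← map_add]
    congr 1
    simp [hv, Prod.ext_iff]
  have hB : Df x (0, x.2 - xb.2) = - Df x (0, xb.2 - x.2) := by
    rw [← map_neg]
    congr 1
    simp [Prod.ext_iff]
  have hNb : β₁ * ‖v‖ ^ 2 ≤ N (x - xb) ^ 2 := by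
    have := hN₁ (x - xb)
    have h1 : ‖(x - xb).1‖ = ‖v‖ := by
      simp [hv, Prod.fst_sub, norm_sub_rev]
    rwa [h1] at this
  -- combine
  rw [hB]
  rw [hA, hnv] at hdesc
  rw [hsplit] at hq
  have hgoal2 : α * (f x - f xb) ≤
      (f x - f (x.1 + α • v, x.2)) - α * Df x (0, xb.2 - x.2) := by
    have hαL : α * (L₁ / 2 * (α * ‖v‖ ^ 2)) ≤ α * (σ / 2 * N (x - xb) ^ 2) := by
      have h1 : L₁ / 2 * (α * ‖v‖ ^ 2) = σ / 2 * (β₁ * ‖v‖ ^ 2) := by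
        field_simp [hαdef]; rw [hαdef, mul_div_assoc', mul_div_cancel_left₀ _ hL₁pos.ne']; ring
      have h2 : σ / 2 * (β₁ * ‖v‖ ^ 2) ≤ σ / 2 * N (x - xb) ^ 2 :=
        mul_le_mul_of_nonneg_left hNb (by positivity)
      exact mul_le_mul_of_nonneg_left (h1 ▸ h2) hα.le
    nlinarith [hdesc, hq]
  have hfin : f x - f xb ≤ (f x - f (x.1 + α • v, x.2)) / α - Df x (0, xb.2 - x.2) := by
    have hDα : α * ((f x - f (x.1 + α • v, x.2)) / α) = f x - f (x.1 + α • v, x.2) := by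
      field_simp
    nlinarith [hgoal2, hDα, hα]
  have hinv : L₁ / (σ * β₁) = 1 / α := by
    rw [hαdef]; field_simp
  have h1α : 1 / α * (f x - f (x.1 + α • v, x.2)) = (f x - f (x.1 + α • v, x.2)) / α := by
    ring
  rw [hinv]
  linarith [hfin, h1α.le, h1α.ge]
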